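/- Let P be a commutative Noetherian ring, A ⊆ B ideals with A ⊆ B², Δ ∈ P with (A :_P Δ) = B, and suppose B is generated by a regular sequence. Let b₂ : B₂ → B₁ be the second Koszul differential on the chosen regular generating sequence of B, and L : B₁ → B₂ a P-module homomorphism with b₂ ∘ L ≡ Δ·id_{B₁} mod A·B₁ and B·I₁(L) ⊆ (A, Δ). Then {β₁ ∈ B₁ | L(β₁) ∈ (A, Δ)·B₂} = B·B₁. -/

import Mathlib

/-- The second Koszul differential `b₂ : Λ²(Pⁿ) → Pⁿ` on a sequence `θ`, with `Λ²(Pⁿ)`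
realized as functions on the set of pairs `i < j`; the basis vector `e_{ij}` is sent to
`θ_j e_i − θ_i e_j`. -/
noncomputable def koszulD2 {P : Type*} [CommRing P] {n : ℕ} (θ : Fin n → P) :
    ({p : Fin n × Fin n // p.1 < p.2} → P) →ₗ[P] (Fin n → P) :=
  ∑ p : {p : Fin n × Fin n // p.1 < p.2},
    (θ p.1.2 • LinearMap.single P (fun _ : Fin n => P) p.1.1 -
      θ p.1.1 • LinearMap.single P (fun _ : Fin n => P) p.1.2) ∘ₗ
      LinearMap.proj p


lemma mem_smul_top_iff' {P : Type*} [CommRing P] {ι : Type*} [Fintype ι] [DecidableEq ι]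
    (I : Ideal P) (x : ι → P) :
    x ∈ I • (⊤ : Submodule P (ι → P)) ↔ ∀ i, x i ∈ I := by
  constructor
  · intro hx i
    refine Submodule.smul_induction_on hx (fun r hr m _ => ?_) (fun a b ha hb => ?_)
    · simpa using I.mul_mem_right (m i) hr
    · exact I.add_mem ha hb
  · intro h
    rw [pi_eq_sum_univ x]
    exact Submodule.sum_mem _ fun i _ =>
      Submodule.smul_mem_smul (h i) trivial

lemma koszulD2_apply' {P : Type*} [CommRing P] {n : ℕ} (θ : Fin n → P)
    (c : {p : Fin n × Fin n // p.1 < p.2} → P) (i : Fin n) :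
    koszulD2 θ c i = ∑ p : {p : Fin n × Fin n // p.1 < p.2},
      (θ p.1.2 * (Pi.single (M := fun _ : Fin n => P)) p.1.1 (c p) i
        - θ p.1.1 * (Pi.single (M := fun _ : Fin n => P)) p.1.2 (c p) i) := by
  simp [koszulD2, LinearMap.sum_apply, Finset.sum_apply]

lemma koszulD2_mem_of_coeff {P : Type*} [CommRing P] {n : ℕ} (θ : Fin n → P)
    (J : Ideal P) (c : {p : Fin n × Fin n // p.1 < p.2} → P)
    (hc : ∀ p, c p ∈ J) (i : Fin n) : koszulD2 θ c i ∈ J := by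
  rw [koszulD2_apply']
  refine Ideal.sum_mem _ fun p _ => sub_mem (J.mul_mem_left _ ?_) (J.mul_mem_left _ ?_) <;>
  · rw [Pi.single_apply]
    split <;> simp [hc p]

lemma koszulD2_mem_of_theta {P : Type*} [CommRing P] {n : ℕ} (θ : Fin n → P)
    (J : Ideal P) (hθ : ∀ k, θ k ∈ J)
    (c : {p : Fin n × Fin n // p.1 < p.2} → P) (i : Fin n) : koszulD2 θ c i ∈ J := by
  rw [koszulD2_apply']
  exact Ideal.sum_mem _ fun p _ =>
    sub_mem (J.mul_mem_right _ (hθ _)) (J.mul_mem_right _ (hθ _))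

/-- Proposition 5.6(c)/(82.1): with `B` generated by a regular sequence `θ`, `A ⊆ B²`,
`(A : Δ) = B`, and `L : B₁ → B₂` satisfying `b₂ ∘ L ≡ Δ·id mod A·B₁` and
`B·I₁(L) ⊆ (A, Δ)`, one has `{β₁ ∈ B₁ | L(β₁) ∈ (A, Δ)·B₂} = B·B₁`. -/
theorem ker_L_eq_B_smul_top
    (P : Type*) [CommRing P] [IsNoetherianRing P]
    (n : ℕ) (θ : Fin n → P)
    (hreg : RingTheory.Sequence.IsRegular P (List.ofFn θ))
    (B : Ideal P) (hB : B = Ideal.span (Set.range θ))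
    (A : Ideal P) (hA : A ≤ B ^ 2)
    (Δ : P) (hΔ : Submodule.colon (A : Submodule P P) (Ideal.span {Δ}) = B)
    (L : (Fin n → P) →ₗ[P] ({p : Fin n × Fin n // p.1 < p.2} → P))
    -- `b₂ ∘ L ≡ Δ · id mod A·B₁`:
    (hL1 : ∀ β : Fin n → P,
      koszulD2 θ (L β) - Δ • β ∈ (A • (⊤ : Submodule P (Fin n → P))))
    -- `B · I₁(L) ⊆ (A, Δ)`:
    (hL2 : ∀ b ∈ B, ∀ (i : Fin n) (p : {p : Fin n × Fin n // p.1 < p.2}),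
      b * (L (Pi.single i 1) p) ∈ A ⊔ Ideal.span {Δ}) :
    ∀ β : Fin n → P,
      (L β ∈ ((A ⊔ Ideal.span {Δ}) •
          (⊤ : Submodule P ({p : Fin n × Fin n // p.1 < p.2} → P)))) ↔
        β ∈ (B • (⊤ : Submodule P (Fin n → P))) := by
  have hθB : ∀ k, θ k ∈ B := fun k => hB ▸ Ideal.subset_span ⟨k, rfl⟩
  intro β
  rw [mem_smul_top_iff', mem_smul_top_iff']
  constructor
  · intro hmem
    -- decompose L β = a + Δ • r componentwise
    have h1 : ∀ p, ∃ a ∈ A, ∃ c : P, a + c * Δ = L β p := by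
      intro p
      obtain ⟨a, ha, z, hz, hsum⟩ := Submodule.mem_sup.1 (hmem p)
      obtain ⟨c, rfl⟩ := Ideal.mem_span_singleton'.1 hz
      exact ⟨a, ha, c, hsum⟩
    choose a ha c hc using h1
    have hLβ : L β = a + Δ • c := by
      ext p
      simp [← hc p, mul_comm]
    have hA1 := hL1 β
    rw [mem_smul_top_iff'] at hA1
    -- Δ * (β i - koszulD2 θ c i) ∈ A for each i
    have key : ∀ i, Δ * (β i - koszulD2 θ c i) ∈ A := by
      intro i
      have e1 : koszulD2 θ (L β) i = koszulD2 θ a i + Δ * koszulD2 θ c i := by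
        rw [hLβ, map_add, map_smul]
        simp
      have h2 : koszulD2 θ a i ∈ A := koszulD2_mem_of_coeff θ A a ha i
      have h3 := hA1 i
      rw [Pi.sub_apply, Pi.smul_apply, smul_eq_mul] at h3
      have : Δ * (β i - koszulD2 θ c i)
          = koszulD2 θ a i - (koszulD2 θ (L β) i - Δ * β i) := by
        rw [e1]; ring
      rw [this]
      exact sub_mem h2 h3
    intro i
    have hBmem : β i - koszulD2 θ c i ∈ B := by
      rw [← hΔ]
      rw [Submodule.mem_colon]
      intro r hr
      obtain ⟨s, rfl⟩ := Ideal.mem_span_singleton'.1 hr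
      have : (β i - koszulD2 θ c i) • (s * Δ) = s * (Δ * (β i - koszulD2 θ c i)) := by
        simp only [smul_eq_mul]; ring
      rw [this]
      exact A.mul_mem_left s (key i)
    have := B.add_mem hBmem (koszulD2_mem_of_theta θ B hθB c i)
    simpa using this
  · intro hβ p
    have hβeq : β = ∑ i, β i • (Pi.single i 1 : Fin n → P) := by
      ext j; simp [Pi.single_apply, eq_comm]
    have heq : L β p = ∑ i, β i * L (Pi.single i 1) p := by
      conv_lhs => rw [hβeq]
      simp [Finset.sum_apply]
    rw [heq]
    exact Ideal.sum_mem _ fun i _ => hL2 (β i) (hβ i) i p
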